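/- Let e ≥ 1 and f_1, …, f_q ≥ 0 be natural numbers with Σ_m f_m = e. Define a_n = (n·e)! / Π_m (n·f_m)!. Then a_n is log-convex: a_n² ≤ a_{n−1} · a_{n+1} for all n ≥ 1. -/
import Mathlib

open Finset

namespace Stmt5Aux

open scoped Classical

variable {q : ℕ} (f : Fin q → ℕ)

/-- the fraction (j+1)/f_m attached to the pair (m,j). -/
noncomputable def ratio (t : (_ : Fin q) × ℕ) : ℚ := (t.2 + 1 : ℚ) / (f t.1)

def key (t : (_ : Fin q) × ℕ) : ℕ := Nat.pair t.1.1 t.2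

noncomputable def klt (s t : (_ : Fin q) × ℕ) : Prop :=
  ratio f s < ratio f t ∨ (ratio f s = ratio f t ∧ key s < key t)

/-- index set: pairs (m, j) with j < f m. -/
def S : Finset ((_ : Fin q) × ℕ) := univ.sigma fun m => range (f m)

lemma mem_S {t : (_ : Fin q) × ℕ} : t ∈ S f ↔ t.2 < f t.1 := by
  obtain ⟨m, j⟩ := t; simp [S]

lemma key_inj {s t : (_ : Fin q) × ℕ} (h : key s = key t) : s = t := by
  obtain ⟨m, j⟩ := s; obtain ⟨m', j'⟩ := t
  simp only [key, Nat.pair_eq_pair] at h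
  obtain ⟨h1, h2⟩ := h
  obtain rfl : m = m' := Fin.val_injective h1
  obtain rfl : j = j' := h2
  rfl

lemma klt_irrefl (t : (_ : Fin q) × ℕ) : ¬ klt f t t := by
  simp [klt]

lemma klt_trans {a b c : (_ : Fin q) × ℕ} (h1 : klt f a b) (h2 : klt f b c) : klt f a c := by
  rcases h1 with h | ⟨h, hk⟩ <;> rcases h2 with h' | ⟨h', hk'⟩
  · exact Or.inl (h.trans h')
  · exact Or.inl (h.trans_eq h')
  · exact Or.inl (h.trans_lt h')
  · exact Or.inr ⟨h.trans h', hk.trans hk'⟩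

lemma klt_total {s t : (_ : Fin q) × ℕ} (h : s ≠ t) : klt f s t ∨ klt f t s := by
  rcases lt_trichotomy (ratio f s) (ratio f t) with h' | h' | h'
  · exact Or.inl (Or.inl h')
  · have hk : key s ≠ key t := fun hk => h (key_inj hk)
    rcases hk.lt_or_gt with hk' | hk'
    · exact Or.inl (Or.inr ⟨h', hk'⟩)
    · exact Or.inr (Or.inr ⟨h'.symm, hk'⟩)
  · exact Or.inr (Or.inl h')

noncomputable def rank (t : (_ : Fin q) × ℕ) : ℕ :=
  ((S f).filter fun s => klt f s t).card

lemma rank_lt {t : (_ : Fin q) × ℕ} (ht : t ∈ S f) : rank f t < (S f).card := by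
  apply Finset.card_lt_card
  rw [Finset.ssubset_iff_of_subset (filter_subset _ _)]
  exact ⟨t, ht, by simp [klt_irrefl]⟩

lemma rank_lt_rank {s t : (_ : Fin q) × ℕ} (hs : s ∈ S f) (h : klt f s t) :
    rank f s < rank f t := by
  apply Finset.card_lt_card
  constructor
  · intro x hx
    rcases mem_filter.mp hx with ⟨hxS, hxs⟩
    exact mem_filter.mpr ⟨hxS, klt_trans f hxs h⟩
  · intro hsub
    have : s ∈ (S f).filter fun x => klt f x s := hsub (mem_filter.mpr ⟨hs, h⟩)
    exact klt_irrefl f s (mem_filter.mp this).2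

lemma rank_injOn : Set.InjOn (rank f) (S f) := by
  intro s hs t ht h
  by_contra hne
  rcases klt_total f hne with h' | h'
  · exact absurd h (rank_lt_rank f hs h').ne
  · exact absurd h.symm (rank_lt_rank f ht h').ne

lemma rank_bound {t : (_ : Fin q) × ℕ} (ht : t ∈ S f) :
    (rank f t + 1) * f t.1 ≤ (t.2 + 1) * ∑ m, f m := by
  have hft : 0 < f t.1 := lt_of_le_of_lt (Nat.zero_le _) ((mem_S f).mp ht)
  have h1 : rank f t + 1 ≤ ((S f).filter fun s => ratio f s ≤ ratio f t).card := by
    have hins : insert t ((S f).filter fun s => klt f s t) ⊆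
        (S f).filter fun s => ratio f s ≤ ratio f t := by
      intro s hs
      rcases mem_insert.mp hs with rfl | hs'
      · exact mem_filter.mpr ⟨ht, le_rfl⟩
      · rcases mem_filter.mp hs' with ⟨hS, hk⟩
        refine mem_filter.mpr ⟨hS, ?_⟩
        rcases hk with h' | ⟨h', _⟩
        · exact h'.le
        · exact h'.le
    have hnot : t ∉ (S f).filter fun s => klt f s t := by simp [klt_irrefl]
    have hc1 : (insert t ((S f).filter fun s => klt f s t)).card = rank f t + 1 := by
      rw [card_insert_of_notMem hnot, rank]
    calc rank f t + 1 = (insert t ((S f).filter fun s => klt f s t)).card := hc1.symm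
      _ ≤ _ := card_le_card hins
  have h2 : ((S f).filter fun s => ratio f s ≤ ratio f t) =
      univ.sigma fun m => (range (f m)).filter fun j => ratio f ⟨m, j⟩ ≤ ratio f t := by
    ext s
    obtain ⟨m, j⟩ := s
    simp [S, and_assoc]
  have h3 : ∀ m' : Fin q,
      ((range (f m')).filter fun j => ratio f ⟨m', j⟩ ≤ ratio f t).card * f t.1
        ≤ (t.2 + 1) * f m' := by
    intro m'
    rcases Nat.eq_zero_or_pos (f m') with hz | hpos
    · simp [hz]
    have hsub : ((range (f m')).filter fun j => ratio f ⟨m', j⟩ ≤ ratio f t) ⊆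
        range (((t.2 + 1) * f m') / f t.1) := by
      intro j hj
      rcases mem_filter.mp hj with ⟨hjr, hle⟩
      have hq : ((j : ℚ) + 1) * (f t.1) ≤ ((t.2 : ℚ) + 1) * (f m') := by
        rw [ratio, ratio, div_le_div_iff₀ (by exact_mod_cast hpos) (by exact_mod_cast hft)] at hle
        exact hle
      have hn : (j + 1) * f t.1 ≤ (t.2 + 1) * f m' := by exact_mod_cast hq
      have : j + 1 ≤ ((t.2 + 1) * f m') / f t.1 := (Nat.le_div_iff_mul_le hft).mpr hn
      exact mem_range.mpr this
    calc ((range (f m')).filter fun j => ratio f ⟨m', j⟩ ≤ ratio f t).card * f t.1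
        ≤ (((t.2 + 1) * f m') / f t.1) * f t.1 := by
          exact Nat.mul_le_mul_right _ (le_trans (card_le_card hsub) (by rw [card_range]))
      _ ≤ (t.2 + 1) * f m' := Nat.div_mul_le_self _ _
  calc (rank f t + 1) * f t.1
      ≤ ((S f).filter fun s => ratio f s ≤ ratio f t).card * f t.1 :=
        Nat.mul_le_mul_right _ h1
    _ = (∑ m', ((range (f m')).filter fun j => ratio f ⟨m', j⟩ ≤ ratio f t).card) * f t.1 := by
        rw [h2, card_sigma]
    _ = ∑ m', ((range (f m')).filter fun j => ratio f ⟨m', j⟩ ≤ ratio f t).card * f t.1 :=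
        sum_mul _ _ _
    _ ≤ ∑ m', (t.2 + 1) * f m' := sum_le_sum fun m' _ => h3 m'
    _ = (t.2 + 1) * ∑ m', f m' := (mul_sum _ _ _).symm

lemma prod_reindex {e : ℕ} (he : (S f).card = e) (g : ℕ → ℕ) :
    ∏ i ∈ range e, g i = ∏ t ∈ S f, g (rank f t) := by
  symm
  apply Finset.prod_nbij (rank f)
  · intro t ht; exact mem_range.mpr (he ▸ rank_lt f ht)
  · exact rank_injOn f
  · have himg : (S f).image (rank f) = range e := by
      apply Finset.eq_of_subset_of_card_le
      · intro b hb
        rcases mem_image.mp hb with ⟨t, ht, rfl⟩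
        exact mem_range.mpr (he ▸ rank_lt f ht)
      · rw [card_range, Finset.card_image_of_injOn (rank_injOn f), he]
    intro b hb
    rw [← Finset.coe_image, himg]
    exact hb
  · intro a _; rfl

lemma core (q e : ℕ) (f : Fin q → ℕ) (hf : ∑ m, f m = e) (p : ℕ) :
    (∏ i ∈ range e, (p * e + i + 1)) *
      ∏ m, ∏ j ∈ range (f m), ((p + 1) * f m + j + 1) ≤
    (∏ i ∈ range e, ((p + 1) * e + i + 1)) *
      ∏ m, ∏ j ∈ range (f m), (p * f m + j + 1) := by
  have hcard : (S f).card = e := by rw [S, card_sigma]; simpa using hf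
  have hd : ∀ c : ℕ, (∏ m, ∏ j ∈ range (f m), (c * f m + j + 1)) =
      ∏ t ∈ S f, (c * f t.1 + t.2 + 1) := by
    intro c; rw [S, Finset.prod_sigma]
  have hr : ∀ c : ℕ, (∏ i ∈ range e, (c * e + i + 1)) =
      ∏ t ∈ S f, (c * e + rank f t + 1) := fun c => prod_reindex f hcard _
  rw [hd, hd, hr, hr, ← prod_mul_distrib, ← prod_mul_distrib]
  apply Finset.prod_le_prod'
  intro t ht
  have hb : (rank f t + 1) * f t.1 ≤ (t.2 + 1) * e := by
    have := rank_bound f ht; rwa [hf] at this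
  set I := rank f t with hI
  set F := f t.1 with hF
  set j := t.2 with hj
  have hid : (p * e + I + 1) * ((p + 1) * F + j + 1) + e * (j + 1)
      = ((p + 1) * e + I + 1) * (p * F + j + 1) + F * (I + 1) := by ring
  have h2 : ((p + 1) * e + I + 1) * (p * F + j + 1) + F * (I + 1)
      ≤ ((p + 1) * e + I + 1) * (p * F + j + 1) + e * (j + 1) := by
    apply Nat.add_le_add_left
    calc F * (I + 1) = (I + 1) * F := Nat.mul_comm _ _
      _ ≤ (j + 1) * e := hb
      _ = e * (j + 1) := Nat.mul_comm _ _
  exact Nat.le_of_add_le_add_right (le_trans (le_of_eq hid) h2)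

lemma fact_add_prod (a k : ℕ) :
    (a + k).factorial = a.factorial * ∏ i ∈ range k, (a + i + 1) := by
  induction k with
  | zero => simp
  | succ k ih =>
    rw [show a + (k + 1) = (a + k) + 1 from rfl, Nat.factorial_succ, ih, prod_range_succ]
    ring

lemma fact_mul (n k : ℕ) :
    ((n + 1) * k).factorial = (n * k).factorial * ∏ i ∈ range k, (n * k + i + 1) := by
  rw [show (n + 1) * k = n * k + k by ring, fact_add_prod]

end Stmt5Aux

/-- For e ≥ 1 and f_1,…,f_q ≥ 0 with ∑ f_m = e, the sequence
a_n = (ne)!/∏_m (nf_m)! is log-convex: a_n² ≤ a_{n−1}·a_{n+1}. -/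
theorem stmt5 (q e : ℕ) (he : 1 ≤ e) (f : Fin q → ℕ) (hf : ∑ m, f m = e)
    (a : ℕ → ℚ)
    (ha : ∀ n, a n = (Nat.factorial (n * e) : ℚ) / ∏ m, (Nat.factorial (n * f m) : ℚ))
    (n : ℕ) (hn : 1 ≤ n) :
    a n ^ 2 ≤ a (n - 1) * a (n + 1) := by
  obtain ⟨p, rfl⟩ : ∃ p, n = p + 1 := ⟨n - 1, (Nat.succ_pred_eq_of_pos hn).symm⟩
  simp only [Nat.add_sub_cancel]
  rw [ha, ha, ha]
  have hDpos : ∀ k : ℕ, (0 : ℚ) < ∏ m, (Nat.factorial (k * f m) : ℚ) :=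
    fun k => Finset.prod_pos fun m _ => by exact_mod_cast Nat.factorial_pos _
  rw [div_pow, div_mul_div_comm, div_le_div_iff₀ (by positivity) (mul_pos (hDpos p) (hDpos (p + 1 + 1)))]
  -- natural-number inequality
  have key : Nat.factorial ((p + 1) * e) ^ 2 *
      ((∏ m, Nat.factorial (p * f m)) * ∏ m, Nat.factorial ((p + 1 + 1) * f m)) ≤
      Nat.factorial (p * e) * Nat.factorial ((p + 1 + 1) * e) *
      (∏ m, Nat.factorial ((p + 1) * f m)) ^ 2 := by
    have hcore := Stmt5Aux.core q e f hf p
    simp only [Stmt5Aux.fact_mul, Finset.prod_mul_distrib]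
    set A := ∏ i ∈ Finset.range e, (p * e + i + 1) with hA
    set A' := ∏ i ∈ Finset.range e, ((p + 1) * e + i + 1) with hA'
    set B := ∏ m, ∏ j ∈ Finset.range (f m), (p * f m + j + 1) with hB
    set B' := ∏ m, ∏ j ∈ Finset.range (f m), ((p + 1) * f m + j + 1) with hB'
    refine le_trans (le_of_eq ?_)
      (le_trans (Nat.mul_le_mul_left
        (Nat.factorial (p * e) ^ 2 * (∏ m, Nat.factorial (p * f m)) ^ 2 * A * B) hcore)
        (le_of_eq ?_))
    · ring
    · ring
  calc ((Nat.factorial ((p + 1) * e) : ℚ)) ^ 2 *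
        ((∏ m, (Nat.factorial (p * f m) : ℚ)) * ∏ m, (Nat.factorial ((p + 1 + 1) * f m) : ℚ))
      = ((Nat.factorial ((p + 1) * e) ^ 2 *
          ((∏ m, Nat.factorial (p * f m)) * ∏ m, Nat.factorial ((p + 1 + 1) * f m)) : ℕ) : ℚ) := by
        push_cast; ring
    _ ≤ ((Nat.factorial (p * e) * Nat.factorial ((p + 1 + 1) * e) *
          (∏ m, Nat.factorial ((p + 1) * f m)) ^ 2 : ℕ) : ℚ) := by exact_mod_cast key
    _ = (Nat.factorial (p * e) : ℚ) * (Nat.factorial ((p + 1 + 1) * e) : ℚ) *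
          ((∏ m, (Nat.factorial ((p + 1) * f m) : ℚ))) ^ 2 := by push_cast; ring
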